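/- Let α : Fin 3 → [0,1] and p, q : Fin 3 → ℝ with p i ≥ 0, q i ≥ 0 for all i and ∑_i p i = ∑_i q i = 1. Define D : ℝ → ℝ by D(x) = ∑_i (p i − q i) · (binEntropy(x ⋆ α i) − binEntropy(α i)). Then the set {x ∈ (0,1) : deriv (deriv D) x = 0} either equals the whole open interval (0,1) or has at most two elements. -/

import Mathlib

/-- Binary convolution: `x ⋆ a = x(1−a) + a(1−x)`. -/
noncomputable def bconv (x a : ℝ) : ℝ := x * (1 - a) + a * (1 - x)

open Real Set

lemma bconv_hasDerivAt (a x : ℝ) : HasDerivAt (fun x : ℝ => bconv x a) (1 - 2*a) x := by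
  have h1 : HasDerivAt (fun x : ℝ => x * (1 - a) + a * (1 - x))
      (1 * (1 - a) + a * (0 - 1)) x :=
    ((hasDerivAt_id x).mul_const (1 - a)).add
      (((hasDerivAt_const x (1:ℝ)).sub (hasDerivAt_id x)).const_mul a)
  simp only [bconv]
  convert h1 using 1
  ring

lemma bconv_mem {x a : ℝ} (hx : x ∈ Ioo (0:ℝ) 1) (ha : a ∈ Icc (0:ℝ) 1) :
    bconv x a ∈ Ioo (0:ℝ) 1 := by
  obtain ⟨hx0, hx1⟩ := hx; obtain ⟨ha0, ha1⟩ := ha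
  have h1 : (0:ℝ) < x * (1 - x) := mul_pos hx0 (by linarith)
  have h2 : 0 ≤ (1 - a) * x^2 := by nlinarith [sq_nonneg x]
  have h3 : 0 ≤ a * (1 - x)^2 := by nlinarith [sq_nonneg (1-x)]
  have h4 : 0 ≤ (1 - a) * (1 - x)^2 := by nlinarith [sq_nonneg (1-x)]
  have h5 : 0 ≤ a * x^2 := by nlinarith [sq_nonneg x]
  constructor <;> (simp only [bconv]; nlinarith)

/-- Root-counting claim from the proof of Theorem 5: the zero set of `D''` in `(0,1)` is
either all of `(0,1)` or has at most two elements. -/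
theorem bsc_three_second_deriv_zeros (α : Fin 3 → ℝ) (hα : ∀ i, α i ∈ Set.Icc (0 : ℝ) 1)
    (p q : Fin 3 → ℝ) (hp : ∀ i, 0 ≤ p i) (hq : ∀ i, 0 ≤ q i)
    (hp1 : ∑ i, p i = 1) (hq1 : ∑ i, q i = 1)
    (D : ℝ → ℝ)
    (hD : D = fun x => ∑ i, (p i - q i) *
      (Real.binEntropy (bconv x (α i)) - Real.binEntropy (α i))) :
    {x | x ∈ Set.Ioo (0 : ℝ) 1 ∧ deriv (deriv D) x = 0} = Set.Ioo (0 : ℝ) 1 ∨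
      ∃ a b : ℝ, {x | x ∈ Set.Ioo (0 : ℝ) 1 ∧ deriv (deriv D) x = 0} ⊆ {a, b} := by
  have hcsum : (p 0 - q 0) + (p 1 - q 1) + (p 2 - q 2) = 0 := by
    simp only [Fin.sum_univ_three] at hp1 hq1; linarith
  -- first derivative
  have hD1 : ∀ x ∈ Ioo (0:ℝ) 1, HasDerivAt D
      (∑ i, (p i - q i) * ((1 - 2 * α i) *
        (Real.log (1 - bconv x (α i)) - Real.log (bconv x (α i))))) x := by
    intro x hx
    rw [hD]
    refine HasDerivAt.fun_sum fun i _ => ?_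
    have hy := bconv_mem hx (hα i)
    have h := ((Real.hasDerivAt_binEntropy (ne_of_gt hy.1) (ne_of_lt hy.2)).comp x
      (bconv_hasDerivAt (α i) x)).sub_const (Real.binEntropy (α i))
    have h2 := h.const_mul (p i - q i)
    convert h2 using 1
    rfl
    rfl
    ring
  have hderiv1 : ∀ x ∈ Ioo (0:ℝ) 1, deriv D x =
      ∑ i, (p i - q i) * ((1 - 2 * α i) *
        (Real.log (1 - bconv x (α i)) - Real.log (bconv x (α i)))) :=
    fun x hx => (hD1 x hx).deriv
  -- second derivative
  have hD2 : ∀ x ∈ Ioo (0:ℝ) 1, deriv (deriv D) x =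
      -(∑ i, (p i - q i) * (1 - 2 * α i)^2 /
        (bconv x (α i) * (1 - bconv x (α i)))) := by
    intro x hx
    have hev : deriv D =ᶠ[nhds x] fun y => ∑ i, (p i - q i) * ((1 - 2 * α i) *
        (Real.log (1 - bconv y (α i)) - Real.log (bconv y (α i)))) := by
      filter_upwards [Ioo_mem_nhds hx.1 hx.2] with y hy using hderiv1 y hy
    rw [hev.deriv_eq]
    refine HasDerivAt.deriv ?_
    have hsum : HasDerivAt (fun y => ∑ i, (p i - q i) * ((1 - 2 * α i) *
        (Real.log (1 - bconv y (α i)) - Real.log (bconv y (α i)))))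
        (∑ i, -((p i - q i) * (1 - 2 * α i)^2 /
          (bconv x (α i) * (1 - bconv x (α i))))) x := by
      refine HasDerivAt.fun_sum fun i _ => ?_
      have hy := bconv_mem hx (hα i)
      have hy0 : bconv x (α i) ≠ 0 := ne_of_gt hy.1
      have hy1 : (1:ℝ) - bconv x (α i) ≠ 0 := sub_ne_zero.mpr (ne_of_gt hy.2)
      have h1 : HasDerivAt (fun y : ℝ => Real.log (1 - bconv y (α i)))
          ((1 - bconv x (α i))⁻¹ * (0 - (1 - 2 * α i))) x :=
        by have := (Real.hasDerivAt_log hy1).comp x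
            ((hasDerivAt_const x (1:ℝ)).sub (bconv_hasDerivAt (α i) x)); exact this
      have h2 : HasDerivAt (fun y : ℝ => Real.log (bconv y (α i)))
          ((bconv x (α i))⁻¹ * (1 - 2 * α i)) x :=
        by have := (Real.hasDerivAt_log hy0).comp x (bconv_hasDerivAt (α i) x); exact this
      have h3 := ((h1.sub h2).const_mul (1 - 2 * α i)).const_mul (p i - q i)
      convert h3 using 1
      rfl
      rfl
      field_simp
      ring
    rw [← Finset.sum_neg_distrib]
    exact hsum
  -- notation for the quadratic
  set Bc : ℝ :=
      (p 0 - q 0) * (1-2*α 0)^2 * ((α 1*(1-α 1))*(1-2*α 2)^2 + (α 2*(1-α 2))*(1-2*α 1)^2)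
    + (p 1 - q 1) * (1-2*α 1)^2 * ((α 0*(1-α 0))*(1-2*α 2)^2 + (α 2*(1-α 2))*(1-2*α 0)^2)
    + (p 2 - q 2) * (1-2*α 2)^2 * ((α 0*(1-α 0))*(1-2*α 1)^2 + (α 1*(1-α 1))*(1-2*α 0)^2)
    with hBcdef
  set Cc : ℝ :=
      (p 0 - q 0) * (1-2*α 0)^2 * ((α 1*(1-α 1))*(α 2*(1-α 2)))
    + (p 1 - q 1) * (1-2*α 1)^2 * ((α 0*(1-α 0))*(α 2*(1-α 2)))
    + (p 2 - q 2) * (1-2*α 2)^2 * ((α 0*(1-α 0))*(α 1*(1-α 1)))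
    with hCcdef
  -- the key formula
  have hkey : ∀ x ∈ Ioo (0:ℝ) 1, deriv (deriv D) x =
      -((Bc * (x*(1-x)) + Cc) /
        ((bconv x (α 0) * (1 - bconv x (α 0))) * (bconv x (α 1) * (1 - bconv x (α 1))) *
          (bconv x (α 2) * (1 - bconv x (α 2))))) := by
    intro x hx
    rw [hD2 x hx]
    have hd : ∀ i : Fin 3, 0 < bconv x (α i) * (1 - bconv x (α i)) := by
      intro i
      have hy := bconv_mem hx (hα i)
      exact mul_pos hy.1 (by linarith [hy.2])
    have hd0 := (hd 0).ne'
    have hd1 := (hd 1).ne'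
    have hd2 := (hd 2).ne'
    rw [Fin.sum_univ_three]
    rw [div_add_div _ _ hd0 hd1, div_add_div _ _ (mul_ne_zero hd0 hd1) hd2]
    rw [neg_inj]
    congr 1
    rw [hBcdef, hCcdef]
    simp only [bconv]
    linear_combination ((x*(1-x))^2 * (1-2*α 0)^2*(1-2*α 1)^2*(1-2*α 2)^2) * hcsum
  have hdprod : ∀ x ∈ Ioo (0:ℝ) 1,
      0 < (bconv x (α 0) * (1 - bconv x (α 0))) * (bconv x (α 1) * (1 - bconv x (α 1))) *
        (bconv x (α 2) * (1 - bconv x (α 2))) := by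
    intro x hx
    have hd : ∀ i : Fin 3, 0 < bconv x (α i) * (1 - bconv x (α i)) := by
      intro i
      have hy := bconv_mem hx (hα i)
      exact mul_pos hy.1 (by linarith [hy.2])
    exact mul_pos (mul_pos (hd 0) (hd 1)) (hd 2)
  have hzero : ∀ x ∈ Ioo (0:ℝ) 1, deriv (deriv D) x = 0 → Bc * (x*(1-x)) + Cc = 0 := by
    intro x hx h0
    rw [hkey x hx, neg_eq_zero, div_eq_zero_iff] at h0
    rcases h0 with h0 | h0
    · exact h0
    · exact absurd h0 (hdprod x hx).ne'
  by_cases hBC : Bc = 0 ∧ Cc = 0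
  · left
    ext x
    simp only [Set.mem_setOf_eq]
    refine ⟨fun h => h.1, fun hx => ⟨hx, ?_⟩⟩
    rw [hkey x hx, hBC.1, hBC.2]
    simp
  · right
    by_cases hB : Bc = 0
    · have hC : Cc ≠ 0 := fun h => hBC ⟨hB, h⟩
      refine ⟨0, 0, fun x hx => absurd ?_ hC⟩
      have := hzero x hx.1 hx.2
      rw [hB] at this
      linarith
    · refine ⟨1/2 + Real.sqrt (1/4 + Cc/Bc), 1/2 - Real.sqrt (1/4 + Cc/Bc), ?_⟩
      rintro x ⟨hx, hx0⟩
      have heq := hzero x hx hx0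
      have h2 : (x - 1/2)^2 = 1/4 + Cc/Bc := by
        have hcb : Cc / Bc = -(x*(1-x)) := by
          field_simp
          linarith
        rw [hcb]
        ring
      have hu : 0 ≤ 1/4 + Cc/Bc := h2 ▸ sq_nonneg _
      have h3 : (x - 1/2)^2 = (Real.sqrt (1/4 + Cc/Bc))^2 := by
        rw [Real.sq_sqrt hu, h2]
      have h4 : (x - 1/2 - Real.sqrt (1/4 + Cc/Bc)) * (x - 1/2 + Real.sqrt (1/4 + Cc/Bc)) = 0 := by
        linear_combination h3
      rcases mul_eq_zero.mp h4 with h | h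
      · left; linarith
      · right
        simp only [Set.mem_singleton_iff]
        linarith
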